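/- Fix d ∈ ℕ. For partitions λ, μ of d with conjugates λ', μ', suppose a nilpotent endomorphism of type μ on a d-dimensional space admits a flag adapted to λ' (i.e. a filtration with successive quotients of dimensions λ'_1, …, λ'_{ℓ(λ')} killed by f). Then λ' ⪯ μ' in dominance order, equivalently μ ⪯ λ. The functions 1_{λ'} (counting such flags with Euler characteristic) therefore form a unitriangular system with respect to dominance order on the set of functions {1_{F_μ}}, and hence the span of {1_{λ'} : λ ⊢ d} modulo generically-zero functions contains, for each λ, an element generically 1 on F_λ and generically 0 on F_μ for μ ≠ λ. -/

import Mathlib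

/-- Fix `d ∈ ℕ`.  (1) For partitions `λ, μ ⊢ d` with conjugates
`lam', mu'`, if a nilpotent endomorphism of Jordan type `μ` on a
`d`-dimensional space admits a flag adapted to `λ'` (a filtration with
successive quotients of dimensions `lam'₀, lam'₁, …` killed by `f`), then
`λ' ⪯ μ'` in dominance order, equivalently `μ ⪯ λ`.  (2) Hence the functions
`1_{λ'}` form a unitriangular system with respect to dominance order: given a
family with coordinates `c l m` (the generic value of the `l`-th function on
`F_m`) satisfying `c l l = 1` and `c l m = 0` unless `m ⪯ l`, there are linear
combinations with delta coordinates, i.e. for each `λ` an element generically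
`1` on `F_λ` and generically `0` on every `F_μ`, `μ ≠ λ`. -/
theorem unitriangular_flag_system (d : ℕ) :
    (∀ (V : Type) (_ : AddCommGroup V), ∀ (_ : Module ℂ V) (_ : FiniteDimensional ℂ V),
      Module.finrank ℂ V = d →
      ∀ (f : Module.End ℂ V), IsNilpotent f →
      ∀ (mu' lam' : ℕ → ℕ), Antitone mu' → Antitone lam' →
      (∀ i : ℕ, Module.finrank ℂ (LinearMap.ker (f ^ i)) = ∑ j ∈ Finset.range i, mu' j) →
      ∀ (ℓ : ℕ), (∑ j ∈ Finset.range ℓ, lam' j = d) →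
      ∀ (W : ℕ → Submodule ℂ V), W 0 = ⊥ → W ℓ = ⊤ → Monotone W →
      (∀ i, Submodule.map f (W (i + 1)) ≤ W i) →
      (∀ i, Module.finrank ℂ (W (i + 1)) = Module.finrank ℂ (W i) + lam' i) →
      ∀ i, ∑ j ∈ Finset.range i, lam' j ≤ ∑ j ∈ Finset.range i, mu' j) ∧
    (∀ (ι : Type) (_ : Fintype ι) (_ : PartialOrder ι) (_ : DecidableEq ι)
        (c : ι → ι → ℚ),
      (∀ l, c l l = 1) → (∀ l m, c l m ≠ 0 → m ≤ l) →
      ∃ M : ι → ι → ℚ, ∀ l m, (∑ ν : ι, M l ν * c ν m) = if l = m then 1 else 0) := by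
  constructor
  · intro V _ _ _ hd f hf mu' lam' hmu hlam hker ℓ hsum W hW0 hWl hWmono hmap hdim i
    have hWker : ∀ i, W i ≤ LinearMap.ker (f ^ i) := by
      intro i
      induction i with
      | zero => rw [hW0]; exact bot_le
      | succ n ih =>
        intro x hx
        have hfx : f x ∈ W n := hmap n ⟨x, hx, rfl⟩
        have h2 := ih hfx
        rw [LinearMap.mem_ker] at h2 ⊢
        rw [pow_succ]
        simpa using h2
    have hWrank : ∀ i, Module.finrank ℂ (W i) = ∑ j ∈ Finset.range i, lam' j := by
      intro i; induction i with
      | zero => simp [hW0]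
      | succ n ih => rw [Finset.sum_range_succ, hdim n, ih]
    calc ∑ j ∈ Finset.range i, lam' j = Module.finrank ℂ (W i) := (hWrank i).symm
      _ ≤ Module.finrank ℂ (LinearMap.ker (f ^ i)) := Submodule.finrank_mono (hWker i)
      _ = ∑ j ∈ Finset.range i, mu' j := hker i
  · intro ι _ _ _ c hdiag htri
    set C : Matrix ι ι ℚ := Matrix.of c with hC
    have hdet : C.det ≠ 0 := by
      intro h
      obtain ⟨v, hv, hvC⟩ := Matrix.exists_vecMul_eq_zero_iff.mpr h
      have hne : (Finset.univ.filter fun l => v l ≠ 0).Nonempty := by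
        rcases Function.ne_iff.mp hv with ⟨l, hl⟩
        exact ⟨l, Finset.mem_filter.mpr ⟨Finset.mem_univ _, hl⟩⟩
      obtain ⟨m, hm, hmax⟩ : ∃ m ∈ (Finset.univ.filter fun l => v l ≠ 0),
          ∀ x ∈ (Finset.univ.filter fun l => v l ≠ 0), ¬ m < x := by
        obtain ⟨m, hm⟩ := Finset.exists_maximal hne
        exact ⟨m, hm.1, fun x hx hlt => lt_irrefl m (lt_of_lt_of_le hlt (hm.2 hx hlt.le))⟩
      have hvm : v m ≠ 0 := (Finset.mem_filter.mp hm).2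
      have h0 : Matrix.vecMul v C m = 0 := congrFun hvC m
      simp only [Matrix.vecMul, dotProduct] at h0
      have : ∑ l, v l * C l m = v m := by
        rw [Finset.sum_eq_single m]
        · simp [hC, hdiag m]
        · intro l _ hlm
          by_cases hcl : c l m = 0
          · simp [hC, hcl]
          · have hle : m ≤ l := htri l m hcl
            have hlt : m < l := lt_of_le_of_ne hle (Ne.symm hlm)
            have : v l = 0 := by
              by_contra hvl
              exact hmax l (Finset.mem_filter.mpr ⟨Finset.mem_univ _, hvl⟩) hlt
            simp [this]
        · intro h; exact absurd (Finset.mem_univ m) h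
      rw [this] at h0
      exact hvm h0
    refine ⟨fun l ν => C⁻¹ l ν, fun l m => ?_⟩
    have h1 : C⁻¹ * C = 1 := Matrix.nonsing_inv_mul C (isUnit_iff_ne_zero.mpr hdet)
    have := congrFun (congrFun h1 l) m
    rw [Matrix.mul_apply] at this
    simpa [Matrix.one_apply, hC] using this
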